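/- Let f : (0,∞) → (0,∞) satisfy f(s) = f(s+1) - 1/f(s+1) for all s > 0 and suppose log f is concave and f(n) = λ_n for all integers n ≥ 1, with λ_n as above. Then for all n ≥ 1 and 1 ≤ k ≤ n, λ_{n+1}^{k-1} λ_{n-k+1} ≤ λ_n^k. -/

import Mathlib

noncomputable def lam : ℕ → ℝ
  | 0 => 0
  | n + 1 => (lam n + Real.sqrt (lam n ^ 2 + 4)) / 2

lemma lam_nonneg : ∀ n, 0 ≤ lam n
  | 0 => le_refl 0
  | n + 1 => by
    have h := lam_nonneg n
    have : (0:ℝ) ≤ Real.sqrt (lam n ^ 2 + 4) := Real.sqrt_nonneg _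
    simp only [lam]; linarith

lemma lam_pos {n : ℕ} (h : 1 ≤ n) : 0 < lam n := by
  obtain ⟨m, rfl⟩ := Nat.exists_eq_add_of_le h
  have h1 := lam_nonneg m
  have h2 : (2:ℝ) ≤ Real.sqrt (lam m ^ 2 + 4) := by
    rw [show (2:ℝ) = Real.sqrt 4 by
      rw [show (4:ℝ) = 2^2 by norm_num, Real.sqrt_sq (by norm_num)]]
    exact Real.sqrt_le_sqrt (by nlinarith [sq_nonneg (lam m)])
  have : lam (1 + m) = (lam m + Real.sqrt (lam m ^ 2 + 4)) / 2 := by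
    rw [Nat.add_comm]; rfl
  rw [this]; linarith

theorem stmt_14 (f : ℝ → ℝ) (hpos : ∀ s : ℝ, 0 < s → 0 < f s)
    (hfe : ∀ s : ℝ, 0 < s → f s = f (s + 1) - 1 / f (s + 1))
    (hconcave : ConcaveOn ℝ (Set.Ioi 0) fun s => Real.log (f s))
    (hfn : ∀ n : ℕ, 1 ≤ n → f n = lam n) :
    ∀ n : ℕ, 1 ≤ n → ∀ k : ℕ, 1 ≤ k → k ≤ n →
      lam (n + 1) ^ (k - 1) * lam (n - k + 1) ≤ lam n ^ k := by
  intro n hn k hk hkn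
  have hk0 : (0:ℝ) < k := by exact_mod_cast hk
  have hnk1 : 1 ≤ n - k + 1 := Nat.le_add_left 1 _
  have hpn1 : 0 < lam (n + 1) := lam_pos (by omega)
  have hpn : 0 < lam n := lam_pos hn
  have hpm : 0 < lam (n - k + 1) := lam_pos hnk1
  -- concavity
  set a : ℝ := ((k:ℝ) - 1) / k with ha_def
  set b : ℝ := 1 / (k:ℝ) with hb_def
  have hk1 : (1:ℝ) ≤ (k:ℝ) := by exact_mod_cast hk
  have ha : 0 ≤ a := div_nonneg (by linarith) (le_of_lt hk0)
  have hb : 0 ≤ b := by positivity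
  have hab : a + b = 1 := by rw [ha_def, hb_def]; field_simp; ring
  have hx : ((n:ℝ) + 1) ∈ Set.Ioi (0:ℝ) := Set.mem_Ioi.mpr (by positivity)
  have hy : ((n - k + 1 : ℕ) : ℝ) ∈ Set.Ioi (0:ℝ) := by
    simp [Set.mem_Ioi]
    exact_mod_cast Nat.lt_of_lt_of_le Nat.zero_lt_one hnk1
  have hcomb : a • ((n:ℝ) + 1) + b • ((n - k + 1 : ℕ) : ℝ) = (n:ℝ) := by
    have hcast : ((n - k + 1 : ℕ) : ℝ) = (n:ℝ) - k + 1 := by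
      push_cast [Nat.sub_add_cancel hkn]
      have : (k:ℝ) ≤ n := by exact_mod_cast hkn
      push_cast [Nat.cast_sub hkn]
      ring
    rw [hcast]
    simp only [smul_eq_mul, ha_def, hb_def]
    field_simp
    ring
  have hcc := hconcave.2 hx hy ha hb hab
  rw [hcomb] at hcc
  simp only [smul_eq_mul] at hcc
  have e1 : f ((n:ℝ) + 1) = lam (n + 1) := by
    have := hfn (n + 1) (by omega); push_cast at this ⊢; exact this
  have e2 : f ((n - k + 1 : ℕ) : ℝ) = lam (n - k + 1) := hfn _ hnk1
  have e3 : f (n:ℝ) = lam n := hfn n hn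
  rw [e1, e2, e3] at hcc
  -- multiply by k
  have key : ((k:ℝ) - 1) * Real.log (lam (n + 1)) + Real.log (lam (n - k + 1))
      ≤ (k:ℝ) * Real.log (lam n) := by
    have := mul_le_mul_of_nonneg_left hcc (le_of_lt hk0)
    have hka : (k:ℝ) * a = (k:ℝ) - 1 := by rw [ha_def]; field_simp
    have hkb : (k:ℝ) * b = 1 := by rw [hb_def]; field_simp
    rw [mul_add, ← mul_assoc, ← mul_assoc, hka, hkb, one_mul] at this
    exact this
  have hlogpow : Real.log (lam (n + 1) ^ (k - 1) * lam (n - k + 1))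
      ≤ Real.log (lam n ^ k) := by
    rw [Real.log_mul (by positivity) (ne_of_gt hpm), Real.log_pow, Real.log_pow]
    have hck : ((k - 1 : ℕ) : ℝ) = (k:ℝ) - 1 := by
      rw [Nat.cast_sub hk]; norm_num
    rw [hck]
    exact key
  have := Real.exp_le_exp.mpr hlogpow
  rwa [Real.exp_log (by positivity), Real.exp_log (by positivity)] at this
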